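/- arXiv:1704.04992 — 5 statements merged into one kernel-verified Lean document; each statement's English description precedes it below -/
import Mathlib

section
/- Let φ and φ̃ be nonzero vectors in a real inner product space such that the angle θ between them satisfies θ < π/2 (equivalently ⟨φ, φ̃⟩ > 0), and suppose ‖φ − φ̃‖ ≤ ε. Then the normalized vectors satisfy ‖ φ/‖φ‖ − φ̃/‖φ̃‖ ‖ ≤ √2 · ε / ‖φ‖. -/
theorem normalized_vectors_close {E : Type*} [NormedAddCommGroup E] [InnerProductSpace ℝ E]
    (φ φt : E) (ε : ℝ) (hφ : φ ≠ 0) (hφt : φt ≠ 0)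
    (hangle : (0 : ℝ) < inner ℝ φ φt) (h : ‖φ - φt‖ ≤ ε) :
    ‖(‖φ‖)⁻¹ • φ - (‖φt‖)⁻¹ • φt‖ ≤ Real.sqrt 2 * ε / ‖φ‖ := by
  set a := ‖φ‖ with ha
  set b := ‖φt‖ with hb
  have ha0 : 0 < a := norm_pos_iff.mpr hφ
  have hb0 : 0 < b := norm_pos_iff.mpr hφt
  set c : ℝ := inner ℝ φ φt with hc
  have hcab : c ≤ a * b := real_inner_le_norm φ φt
  have hε0 : 0 ≤ ε := le_trans (norm_nonneg _) h
  have hd : ‖φ - φt‖^2 = a^2 + b^2 - 2*c := by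
    rw [@norm_sub_sq_real]; ring
  have hd2 : a^2 + b^2 - 2*c ≤ ε^2 := by
    rw [← hd]; exact pow_le_pow_left₀ (norm_nonneg _) h 2
  have hns : ‖(a)⁻¹ • φ - (b)⁻¹ • φt‖^2 = 2 - 2*c/(a*b) := by
    rw [@norm_sub_sq_real, norm_smul, norm_smul, real_inner_smul_left, real_inner_smul_right]
    rw [Real.norm_eq_abs, Real.norm_eq_abs, abs_of_pos (inv_pos.mpr ha0),
      abs_of_pos (inv_pos.mpr hb0)]
    field_simp
    ring
  have hrhs0 : 0 ≤ Real.sqrt 2 * ε / a := by positivity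
  have hineq : 2 - 2*c/(a*b) ≤ (Real.sqrt 2 * ε / a)^2 := by
    have hs2 : (Real.sqrt 2)^2 = 2 := Real.sq_sqrt (by norm_num)
    rw [div_pow, mul_pow, hs2]
    have e1 : 2 - 2*c/(a*b) = (2*(a*b) - 2*c)/(a*b) := by field_simp
    rw [e1, div_le_div_iff₀ (by positivity) (by positivity)]
    rcases le_or_gt (2*b) a with h' | h'
    · nlinarith [mul_nonneg hangle.le (sub_nonneg.mpr h'), mul_pos ha0 hb0,
        mul_nonneg hb0.le (sq_nonneg (a-b))]
    · nlinarith [mul_nonneg (sub_nonneg.mpr hcab) (sub_pos.mpr h').le,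
        mul_nonneg hb0.le (sq_nonneg (a-b)), mul_pos ha0 hb0]
  calc ‖(a)⁻¹ • φ - (b)⁻¹ • φt‖
      = Real.sqrt (‖(a)⁻¹ • φ - (b)⁻¹ • φt‖^2) := by
        rw [Real.sqrt_sq (norm_nonneg _)]
    _ ≤ Real.sqrt ((Real.sqrt 2 * ε / a)^2) := Real.sqrt_le_sqrt (by rw [hns]; exact hineq)
    _ = Real.sqrt 2 * ε / a := Real.sqrt_sq hrhs0
end

section
/- Let P̃ ∈ ℝ^{N×m} and Q̃ ∈ ℝ^{N×n} be isometries, i.e. P̃ᵀP̃ = I_m and Q̃ᵀQ̃ = I_n, and let M = P̃ᵀQ̃ ∈ ℝ^{m×n}. Suppose u ∈ ℝ^m and v ∈ ℝ^n form a singular pair of M with singular value σ, i.e. M v = σ u and Mᵀ u = σ v. Then the unitary-type operator W = (2P̃P̃ᵀ − I_N)(2Q̃Q̃ᵀ − I_N) satisfies W(Q̃v) = 2σ · P̃u − Q̃v and W(P̃u) = (4σ² − 1) · P̃u − 2σ · Q̃v; in particular the two-dimensional subspace Span(P̃u, Q̃v) is invariant under W. -/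
open Matrix

theorem quantum_walk_invariant_subspace {N m n : ℕ}
    (Pt : Matrix (Fin N) (Fin m) ℝ) (Qt : Matrix (Fin N) (Fin n) ℝ)
    (hPt : Ptᵀ * Pt = 1) (hQt : Qtᵀ * Qt = 1)
    (M : Matrix (Fin m) (Fin n) ℝ) (hM : M = Ptᵀ * Qt)
    (u : Fin m → ℝ) (v : Fin n → ℝ) (σ : ℝ)
    (hMv : M.mulVec v = σ • u) (hMu : Mᵀ.mulVec u = σ • v)
    (W : Matrix (Fin N) (Fin N) ℝ)
    (hW : W = ((2 : ℝ) • (Pt * Ptᵀ) - 1) * ((2 : ℝ) • (Qt * Qtᵀ) - 1)) :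
    W.mulVec (Qt.mulVec v) = (2 * σ) • Pt.mulVec u - Qt.mulVec v ∧
      W.mulVec (Pt.mulVec u) = (4 * σ ^ 2 - 1) • Pt.mulVec u - (2 * σ) • Qt.mulVec v := by
  subst hW hM
  have h1 : Qtᵀ.mulVec (Qt.mulVec v) = v := by
    rw [mulVec_mulVec, hQt, one_mulVec]
  have h2 : Ptᵀ.mulVec (Pt.mulVec u) = u := by
    rw [mulVec_mulVec, hPt, one_mulVec]
  have h3 : Ptᵀ.mulVec (Qt.mulVec v) = σ • u := by
    rw [mulVec_mulVec, hMv]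
  have h4 : Qtᵀ.mulVec (Pt.mulVec u) = σ • v := by
    have := hMu
    rw [transpose_mul, transpose_transpose] at this
    rw [mulVec_mulVec, this]
  constructor <;>
    simp only [← mulVec_mulVec, sub_mulVec, smul_mulVec, one_mulVec, mulVec_sub, mulVec_smul, smul_sub, smul_smul,
      h1, h2, h3, h4] <;>
    module
end

section
/- Let A ∈ ℝ^{m×n} be a nonzero matrix and p ∈ [0,1]. Define s_{2p}(A) = max_{i∈[m]} Σ_{j∈[n]} |A_{ij}|^{2p} and s_{2(1−p)}(Aᵀ) = max_{j∈[n]} Σ_{i∈[m]} |A_{ij}|^{2(1−p)}, and set μ_p(A) = √(s_{2p}(A) · s_{2(1−p)}(Aᵀ)). Define matrices P, Q ∈ ℝ^{m×n} by P_{ij} = sign(A_{ij}) |A_{ij}|^{p} / √(s_{2p}(A)) and Q_{ij} = |A_{ij}|^{1−p} / √(s_{2(1−p)}(Aᵀ)). Then every row of P has ℓ₂-norm at most 1, every column of Q has ℓ₂-norm at most 1, and P ∘ Q = A / μ_p(A). -/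
open Matrix

private lemma rpow_sq (x q : ℝ) (hx : 0 ≤ x) : (x ^ q) ^ 2 = x ^ (2 * q) := by
  rw [← Real.rpow_natCast (x ^ q) 2, ← Real.rpow_mul hx, mul_comm]
  norm_num

theorem mu_p_factorization {m n : ℕ} (A : Matrix (Fin m) (Fin n) ℝ) (hA : A ≠ 0)
    (p : ℝ) (hp : p ∈ Set.Icc (0 : ℝ) 1)
    (s₁ s₂ μ : ℝ)
    (hs₁ : s₁ = ⨆ i : Fin m, ∑ j, |A i j| ^ (2 * p))
    (hs₂ : s₂ = ⨆ j : Fin n, ∑ i, |A i j| ^ (2 * (1 - p)))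
    (hμ : μ = Real.sqrt (s₁ * s₂))
    (P Q : Matrix (Fin m) (Fin n) ℝ)
    (hP : ∀ i j, P i j = Real.sign (A i j) * |A i j| ^ p / Real.sqrt s₁)
    (hQ : ∀ i j, Q i j = |A i j| ^ (1 - p) / Real.sqrt s₂) :
    (∀ i, Real.sqrt (∑ j, (P i j) ^ 2) ≤ 1) ∧
      (∀ j, Real.sqrt (∑ i, (Q i j) ^ 2) ≤ 1) ∧
      Matrix.hadamard P Q = μ⁻¹ • A := by
  obtain ⟨i0, j0, ha⟩ : ∃ i j, A i j ≠ 0 := by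
    by_contra h
    push_neg at h
    exact hA (by ext i j; simp [h])
  have hm : Nonempty (Fin m) := ⟨i0⟩
  have hn : Nonempty (Fin n) := ⟨j0⟩
  have hs1pos : 0 < s₁ := by
    rw [hs₁]
    have h1 : (0:ℝ) < ∑ j, |A i0 j| ^ (2 * p) :=
      Finset.sum_pos' (fun j _ => Real.rpow_nonneg (abs_nonneg _) _)
        ⟨j0, Finset.mem_univ _, Real.rpow_pos_of_pos (abs_pos.mpr ha) _⟩
    exact h1.trans_le (le_ciSup (f := fun i => ∑ j, |A i j| ^ (2 * p)) (Set.Finite.bddAbove (Set.finite_range _)) i0)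
  have hs2pos : 0 < s₂ := by
    rw [hs₂]
    have h1 : (0:ℝ) < ∑ i, |A i j0| ^ (2 * (1 - p)) :=
      Finset.sum_pos' (fun i _ => Real.rpow_nonneg (abs_nonneg _) _)
        ⟨i0, Finset.mem_univ _, Real.rpow_pos_of_pos (abs_pos.mpr ha) _⟩
    exact h1.trans_le (le_ciSup (f := fun j => ∑ i, |A i j| ^ (2 * (1 - p))) (Set.Finite.bddAbove (Set.finite_range _)) j0)
  have hrow : ∀ i, (∑ j, |A i j| ^ (2 * p)) ≤ s₁ := fun i =>
    hs₁ ▸ le_ciSup (f := fun i => ∑ j, |A i j| ^ (2 * p)) (Set.Finite.bddAbove (Set.finite_range _)) i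
  have hcol : ∀ j, (∑ i, |A i j| ^ (2 * (1 - p))) ≤ s₂ := fun j =>
    hs₂ ▸ le_ciSup (f := fun j => ∑ i, |A i j| ^ (2 * (1 - p))) (Set.Finite.bddAbove (Set.finite_range _)) j
  refine ⟨?_, ?_, ?_⟩
  · intro i
    refine Real.sqrt_le_one.mpr ?_
    have hterm : ∀ j, (P i j) ^ 2 ≤ |A i j| ^ (2 * p) / s₁ := by
      intro j
      rw [hP]
      by_cases h : A i j = 0
      · simp [h, Real.sign_zero]
        positivity
      · have hsgn : (Real.sign (A i j)) ^ 2 = 1 := by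
          rcases lt_or_gt_of_ne h with h' | h'
          · rw [Real.sign_of_neg h']; norm_num
          · rw [Real.sign_of_pos h']; norm_num
        rw [div_pow, mul_pow, hsgn, one_mul, Real.sq_sqrt hs1pos.le,
          rpow_sq _ _ (abs_nonneg _)]
    calc ∑ j, (P i j) ^ 2 ≤ ∑ j, |A i j| ^ (2 * p) / s₁ :=
          Finset.sum_le_sum (fun j _ => hterm j)
      _ = (∑ j, |A i j| ^ (2 * p)) / s₁ := by rw [Finset.sum_div]
      _ ≤ 1 := (div_le_one hs1pos).mpr (hrow i)
  · intro j
    refine Real.sqrt_le_one.mpr ?_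
    have hterm : ∀ i, (Q i j) ^ 2 = |A i j| ^ (2 * (1 - p)) / s₂ := by
      intro i
      rw [hQ, div_pow, Real.sq_sqrt hs2pos.le, rpow_sq _ _ (abs_nonneg _)]
    calc ∑ i, (Q i j) ^ 2 = ∑ i, |A i j| ^ (2 * (1 - p)) / s₂ := by
          simp_rw [hterm]
      _ = (∑ i, |A i j| ^ (2 * (1 - p))) / s₂ := by rw [Finset.sum_div]
      _ ≤ 1 := (div_le_one hs2pos).mpr (hcol j)
  · ext i j
    rw [Matrix.hadamard_apply, hP, hQ, Matrix.smul_apply, smul_eq_mul]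
    by_cases h : A i j = 0
    · simp [h, Real.sign_zero]
    · have habs : |A i j| ^ p * |A i j| ^ (1 - p) = |A i j| := by
        rw [← Real.rpow_add (abs_pos.mpr h)]
        norm_num
      have hmu : μ = Real.sqrt s₁ * Real.sqrt s₂ := by
        rw [hμ, Real.sqrt_mul hs1pos.le]
      have h1 : Real.sqrt s₁ ≠ 0 := (Real.sqrt_pos.mpr hs1pos).ne'
      have h2 : Real.sqrt s₂ ≠ 0 := (Real.sqrt_pos.mpr hs2pos).ne'
      rw [hmu]
      field_simp
      rw [mul_assoc, habs]
      rcases lt_or_gt_of_ne h with h' | h'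
      · rw [Real.sign_of_neg h', abs_of_neg h']; ring
      · rw [Real.sign_of_pos h', abs_of_pos h']; ring
end

section
/- Let A ∈ ℝ^{n×n} be symmetric positive semidefinite with spectral decomposition A = Σ_i λ_i v_i v_iᵀ, where (v_i) is an orthonormal eigenbasis and all eigenvalues satisfy 1/κ ≤ λ_i ≤ 1 for some κ ≥ 1. Let x = Σ_i β_i v_i and suppose z = Σ_i (λ_i + ε̃_i) β_i v_i with |ε̃_i| ≤ ε₁ for all i. Then ‖Ax − z‖ ≤ ε₁ ‖x‖, and if Ax and z are nonzero with ⟨Ax, z⟩ > 0, the normalized vectors satisfy ‖ Ax/‖Ax‖ − z/‖z‖ ‖ ≤ √2 · ε₁ · κ. -/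
open Matrix

lemma aux_angle (a b c d e : ℝ) (ha : 0 < a) (hb : 0 < b) (hc : 0 < c)
    (hcab : c ≤ a * b) (hd2 : d ^ 2 = a ^ 2 - 2 * c + b ^ 2)
    (hde : d ^ 2 ≤ e ^ 2 * a ^ 2) :
    2 - 2 * (c / (a * b)) ≤ 2 * e ^ 2 := by
  have hab : 0 < a * b := mul_pos ha hb
  have h1 : a ^ 2 * b ^ 2 - c ^ 2 ≤ d ^ 2 * b ^ 2 := by nlinarith [sq_nonneg (c - b ^ 2)]
  have hkey : a * b - c ≤ e ^ 2 * (a * b) := by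
    nlinarith [mul_le_mul_of_nonneg_right hde (sq_nonneg b), mul_pos hab hc, sq_nonneg e,
      mul_nonneg (mul_nonneg (sq_nonneg e) hab.le) hc.le]
  have h2 : 1 - e ^ 2 ≤ c / (a * b) := by
    rw [le_div_iff₀ hab]; nlinarith
  linarith

set_option maxHeartbeats 1000000 in
theorem matrix_multiplication_error {n : ℕ} (A : Matrix (Fin n) (Fin n) ℝ)
    (hsymm : A.IsSymm) (κ ε₁ : ℝ) (hκ : 1 ≤ κ)
    (v : Fin n → EuclideanSpace ℝ (Fin n)) (lam : Fin n → ℝ)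
    (hortho : Orthonormal ℝ v)
    (heig : ∀ i, Matrix.toEuclideanLin A (v i) = lam i • v i)
    (hlam : ∀ i, 1 / κ ≤ lam i ∧ lam i ≤ 1)
    (β εt : Fin n → ℝ) (hεt : ∀ i, |εt i| ≤ ε₁)
    (x z : EuclideanSpace ℝ (Fin n))
    (hx : x = ∑ i, β i • v i)
    (hz : z = ∑ i, ((lam i + εt i) * β i) • v i) :
    ‖Matrix.toEuclideanLin A x - z‖ ≤ ε₁ * ‖x‖ ∧
      (Matrix.toEuclideanLin A x ≠ 0 → z ≠ 0 →
        (0 : ℝ) < inner ℝ (Matrix.toEuclideanLin A x) z →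
        ‖(‖Matrix.toEuclideanLin A x‖)⁻¹ • Matrix.toEuclideanLin A x - (‖z‖)⁻¹ • z‖ ≤
          Real.sqrt 2 * ε₁ * κ) := by
  have hκ0 : (0 : ℝ) < κ := lt_of_lt_of_le one_pos hκ
  set y := Matrix.toEuclideanLin A x with hy_def
  have hy : y = ∑ i, (lam i * β i) • v i := by
    rw [hy_def, hx, map_sum]
    refine Finset.sum_congr rfl fun i _ => ?_
    rw [_root_.map_smul, heig i, smul_smul, mul_comm]
  -- norms squared
  have hxn : ‖x‖ ^ 2 = ∑ i, β i ^ 2 := by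
    rw [← real_inner_self_eq_norm_sq, hx, hortho.inner_sum]
    simp [sq]
  have hyn : ‖y‖ ^ 2 = ∑ i, (lam i * β i) ^ 2 := by
    rw [← real_inner_self_eq_norm_sq, hy, hortho.inner_sum]
    simp [sq]
  have hyz : y - z = ∑ i, (-(εt i * β i)) • v i := by
    rw [hy, hz, ← Finset.sum_sub_distrib]
    refine Finset.sum_congr rfl fun i _ => ?_
    rw [← sub_smul]
    congr 1
    ring
  have hdn : ‖y - z‖ ^ 2 = ∑ i, (εt i * β i) ^ 2 := by
    rw [← real_inner_self_eq_norm_sq, hyz, hortho.inner_sum]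
    refine Finset.sum_congr rfl fun i _ => ?_
    simp only [starRingEnd_apply, star_trivial]
    ring
  -- part 1
  have hd2 : ‖y - z‖ ^ 2 ≤ (ε₁ * ‖x‖) ^ 2 := by
    rw [hdn]
    have : (ε₁ * ‖x‖) ^ 2 = ∑ i, ε₁ ^ 2 * β i ^ 2 := by
      rw [← Finset.mul_sum, ← hxn]; ring
    rw [this]
    refine Finset.sum_le_sum fun i _ => ?_
    have h1 : (εt i) ^ 2 ≤ ε₁ ^ 2 := by
      have := hεt i
      nlinarith [abs_nonneg (εt i), sq_abs (εt i)]
    nlinarith [sq_nonneg (β i)]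
  have part1 : ‖y - z‖ ≤ ε₁ * ‖x‖ := by
    rcases isEmpty_or_nonempty (Fin n) with he | hne
    · have : y - z = 0 := by rw [hyz]; simp [Finset.univ_eq_empty]
      have hx0 : x = 0 := by rw [hx]; simp [Finset.univ_eq_empty]
      rw [this, hx0]
      simp
    · have hε0 : 0 ≤ ε₁ := le_trans (abs_nonneg _) (hεt hne.some)
      have h := Real.sqrt_le_sqrt hd2
      rwa [Real.sqrt_sq (norm_nonneg _), Real.sqrt_sq (mul_nonneg hε0 (norm_nonneg _))] at h
  refine ⟨part1, fun hy0 hz0 hc => ?_⟩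
  -- part 2
  have hne : Nonempty (Fin n) := by
    rcases isEmpty_or_nonempty (Fin n) with he | hne
    · exact absurd (by rw [hy]; simp [Finset.univ_eq_empty] : y = 0) hy0
    · exact hne
  have hε0 : 0 ≤ ε₁ := le_trans (abs_nonneg _) (hεt hne.some)
  set a := ‖y‖ with ha_def
  set b := ‖z‖ with hb_def
  set c : ℝ := inner ℝ y z with hc_def
  have ha : 0 < a := norm_pos_iff.mpr hy0
  have hb : 0 < b := norm_pos_iff.mpr hz0
  have hcab : c ≤ a * b := real_inner_le_norm y z
  have hdsq : ‖y - z‖ ^ 2 = a ^ 2 - 2 * c + b ^ 2 := by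
    rw [@norm_sub_sq_real]
  -- ‖x‖ ≤ κ * a
  have hxa : ‖x‖ ≤ κ * a := by
    have hsq : ‖x‖ ^ 2 ≤ κ ^ 2 * a ^ 2 := by
      rw [hxn, hyn, Finset.mul_sum]
      refine Finset.sum_le_sum fun i _ => ?_
      have h1 := (hlam i).1
      have h2 : 1 ≤ lam i * κ := (div_le_iff₀ hκ0).mp h1
      have h3 : 1 * 1 ≤ (lam i * κ) * (lam i * κ) :=
        mul_le_mul h2 h2 one_pos.le (by linarith)
      nlinarith [sq_nonneg (β i)]
    have h := Real.sqrt_le_sqrt hsq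
    rwa [Real.sqrt_sq (norm_nonneg _), show κ ^ 2 * a ^ 2 = (κ * a) ^ 2 by ring,
      Real.sqrt_sq (by positivity)] at h
  have hd : ‖y - z‖ ≤ ε₁ * κ * a := by
    calc ‖y - z‖ ≤ ε₁ * ‖x‖ := part1
      _ ≤ ε₁ * (κ * a) := mul_le_mul_of_nonneg_left hxa hε0
      _ = ε₁ * κ * a := by ring
  have hde : ‖y - z‖ ^ 2 ≤ (ε₁ * κ) ^ 2 * a ^ 2 := by
    calc ‖y - z‖ ^ 2 ≤ (ε₁ * κ * a) ^ 2 := pow_le_pow_left₀ (norm_nonneg _) hd 2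
      _ = (ε₁ * κ) ^ 2 * a ^ 2 := by ring
  have hmain := aux_angle a b c (‖y - z‖) (ε₁ * κ) ha hb hc hcab hdsq hde
  -- compute g²
  set g := ‖a⁻¹ • y - b⁻¹ • z‖ with hg_def
  have hg2 : g ^ 2 = 2 - 2 * (c / (a * b)) := by
    rw [hg_def, @norm_sub_sq_real, norm_smul, norm_smul, real_inner_smul_left,
      real_inner_smul_right]
    rw [Real.norm_eq_abs, Real.norm_eq_abs, abs_inv, abs_inv, abs_of_pos ha, abs_of_pos hb,
      ← ha_def, ← hb_def, ← hc_def]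
    field_simp
    ring
  have hgsq : g ^ 2 ≤ 2 * ε₁ ^ 2 * κ ^ 2 := by
    rw [hg2]
    calc 2 - 2 * (c / (a * b)) ≤ 2 * (ε₁ * κ) ^ 2 := hmain
      _ = 2 * ε₁ ^ 2 * κ ^ 2 := by ring
  have hgle : g ≤ Real.sqrt (2 * ε₁ ^ 2 * κ ^ 2) := by
    have hg0 : (0:ℝ) ≤ g := hg_def ▸ norm_nonneg _
    calc g = Real.sqrt (g ^ 2) := (Real.sqrt_sq hg0).symm
      _ ≤ _ := Real.sqrt_le_sqrt hgsq
  calc g ≤ Real.sqrt (2 * ε₁ ^ 2 * κ ^ 2) := hgle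
    _ = Real.sqrt 2 * ε₁ * κ := by
        rw [show 2 * ε₁ ^ 2 * κ ^ 2 = 2 * (ε₁ * κ) ^ 2 by ring, Real.sqrt_mul (by norm_num),
          Real.sqrt_sq (by positivity)]
        ring
end

section
/- Let A ∈ ℝ^{n×n} be symmetric positive definite with orthonormal eigensystem (v_i, λ_i) where 1/κ ≤ λ_i ≤ 1 for some κ ≥ 1. Let x = Σ_i β_i v_i be nonzero, and let z = Σ_i β_i/(λ_i + ε̃_i) v_i with |ε̃_i| ≤ ε₁ for all i, where κ ε₁ ≤ 1/2. Then ‖A^{−1}x − z‖ ≤ 2 ε₁ κ ‖A^{−1}x‖, and if ⟨A^{−1}x, z⟩ > 0 the normalized vectors satisfy ‖ A^{−1}x/‖A^{−1}x‖ − z/‖z‖ ‖ ≤ 2√2 · κ · ε₁. -/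
open Matrix

private lemma aux_angle_bound (W Z P c D : ℝ) (hW0 : 0 < W) (hZ0 : 0 < Z)
    (hP : 0 < P) (hCS : P ≤ W * Z) (hc0 : 0 ≤ c)
    (hsub : W^2 + Z^2 - 2*P ≤ c^2 * W^2)
    (hD : D^2 = 2 - 2*(P/(W*Z))) (hD0 : 0 ≤ D) :
    D ≤ Real.sqrt 2 * c := by
  have hkey : W^2*Z^2 - P^2 ≤ c^2 * W^2 * Z^2 := by
    nlinarith [sq_nonneg (Z^2 - P), mul_le_mul_of_nonneg_right hsub (sq_nonneg Z)]
  set s := P / (W*Z) with hs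
  have hs0 : 0 < s := div_pos hP (by positivity)
  have hs1 : s ≤ 1 := by
    rw [hs, div_le_one (by positivity)]; exact hCS
  have hs2 : 1 - s^2 ≤ c^2 := by
    have hWZ : (0:ℝ) < (W*Z)^2 := by positivity
    have heq : 1 - s^2 = (W^2*Z^2 - P^2)/(W*Z)^2 := by
      rw [hs]; field_simp
    rw [heq, div_le_iff₀ hWZ]
    nlinarith [hkey]
  have hfinal : D^2 ≤ (Real.sqrt 2 * c)^2 := by
    rw [hD, mul_pow, Real.sq_sqrt (by norm_num : (0:ℝ) ≤ 2)]
    nlinarith [mul_nonneg (sub_nonneg.mpr hs1) hs0.le]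
  exact (pow_le_pow_iff_left₀ hD0 (mul_nonneg (Real.sqrt_nonneg 2) hc0) two_ne_zero).mp hfinal


set_option maxHeartbeats 1600000 in
theorem matrix_inversion_error {n : ℕ} (A : Matrix (Fin n) (Fin n) ℝ)
    (hsymm : A.IsSymm) (κ ε₁ : ℝ) (hκ : 1 ≤ κ) (hκε : κ * ε₁ ≤ 1 / 2)
    (v : Fin n → EuclideanSpace ℝ (Fin n)) (lam : Fin n → ℝ)
    (hortho : Orthonormal ℝ v)
    (heig : ∀ i, Matrix.toEuclideanLin A (v i) = lam i • v i)
    (hlam : ∀ i, 1 / κ ≤ lam i ∧ lam i ≤ 1)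
    (β εt : Fin n → ℝ) (hεt : ∀ i, |εt i| ≤ ε₁)
    (x z : EuclideanSpace ℝ (Fin n)) (hx0 : x ≠ 0)
    (hx : x = ∑ i, β i • v i)
    (hz : z = ∑ i, (β i / (lam i + εt i)) • v i) :
    ‖Matrix.toEuclideanLin A⁻¹ x - z‖ ≤ 2 * ε₁ * κ * ‖Matrix.toEuclideanLin A⁻¹ x‖ ∧
      ((0 : ℝ) < inner ℝ (Matrix.toEuclideanLin A⁻¹ x) z →
        ‖(‖Matrix.toEuclideanLin A⁻¹ x‖)⁻¹ • Matrix.toEuclideanLin A⁻¹ x - (‖z‖)⁻¹ • z‖ ≤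
          2 * Real.sqrt 2 * κ * ε₁) := by
  have hκ0 : (0:ℝ) < κ := lt_of_lt_of_le one_pos hκ
  have hn : 0 < n := by
    rcases Nat.eq_zero_or_pos n with h | h
    · exfalso; apply hx0; subst h; simpa using hx
    · exact h
  have hε₁ : 0 ≤ ε₁ := le_trans (abs_nonneg _) (hεt ⟨0, hn⟩)
  have hlp : ∀ i, 0 < lam i := fun i =>
    lt_of_lt_of_le (by positivity) (hlam i).1
  have hden : ∀ i, 1 / (2*κ) ≤ lam i + εt i := by
    intro i
    have h1 := (abs_le.mp (hεt i)).1
    have h2 := (hlam i).1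
    have hε₁κ : ε₁ ≤ 1/(2*κ) := by
      rw [le_div_iff₀ (by positivity)]; nlinarith
    have h3 : 1/κ - 1/(2*κ) = 1/(2*κ) := by field_simp; ring
    linarith
  have hdenp : ∀ i, 0 < lam i + εt i := fun i =>
    lt_of_lt_of_le (by positivity) (hden i)
  set f := Matrix.toEuclideanLin A with hf
  set g := Matrix.toEuclideanLin A⁻¹ with hg
  haveI : Nonempty (Fin n) := ⟨⟨0, hn⟩⟩
  let b : Module.Basis (Fin n) ℝ (EuclideanSpace ℝ (Fin n)) :=
    basisOfOrthonormalOfCardEqFinrank hortho (by simp)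
  have hbv : ⇑b = v := coe_basisOfOrthonormalOfCardEqFinrank hortho _
  -- f is surjective, hence injective
  have hsurj : Function.Surjective f := by
    rw [← LinearMap.range_eq_top, ← top_le_iff, ← b.span_eq, Submodule.span_le]
    rintro _ ⟨i, rfl⟩
    rw [hbv]
    exact ⟨(lam i)⁻¹ • v i, by
      rw [_root_.map_smul, hf, heig i, smul_smul, inv_mul_cancel₀ (hlp i).ne', one_smul]⟩
  have hinj : Function.Injective f :=
    (LinearMap.injective_iff_surjective).mpr hsurj
  set bb := (PiLp.basisFun 2 ℝ (Fin n)) with hbb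
  have he : ∀ M : Matrix (Fin n) (Fin n) ℝ,
      ⇑(Matrix.toLinAlgEquiv bb M) = ⇑(Matrix.toEuclideanLin M) := fun M => rfl
  -- A is a unit
  have hUA : IsUnit A := by
    have h1 : IsUnit (Matrix.toLinAlgEquiv bb A) := by
      rw [LinearMap.isUnit_iff_ker_eq_bot]
      apply LinearMap.ker_eq_bot.mpr
      show Function.Injective (Matrix.toLinAlgEquiv bb A)
      rw [he]
      exact hinj
    have h2 := h1.map (Matrix.toLinAlgEquiv bb).symm
    rwa [AlgEquiv.symm_apply_apply] at h2
  -- g inverts f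
  have hmul : Matrix.toLinAlgEquiv bb A⁻¹ * Matrix.toLinAlgEquiv bb A = 1 := by
    rw [← _root_.map_mul, Matrix.nonsing_inv_mul A ((Matrix.isUnit_iff_isUnit_det A).mp hUA), _root_.map_one]
  have hginv : ∀ u, g (f u) = u := by
    intro u
    have : (Matrix.toLinAlgEquiv bb A⁻¹ * Matrix.toLinAlgEquiv bb A) u = u := by
      rw [hmul]; rfl
    rwa [Module.End.mul_apply, he, he] at this
  -- action of g on eigenvectors
  have hgv : ∀ i, g (v i) = (lam i)⁻¹ • v i := by
    intro i
    have h1 : g (lam i • v i) = v i := by rw [← heig i]; exact hginv _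
    conv_rhs => rw [← h1]
    rw [_root_.map_smul, smul_smul, inv_mul_cancel₀ (hlp i).ne', one_smul]
  -- expansion of w = g x
  have hw : g x = ∑ i, (β i / lam i) • v i := by
    rw [hx, map_sum]
    refine Finset.sum_congr rfl fun i _ => ?_
    rw [_root_.map_smul, hgv i, smul_smul, div_eq_mul_inv]
  -- norm squared formula
  have hnorm : ∀ l : Fin n → ℝ, ‖∑ i, l i • v i‖^2 = ∑ i, (l i)^2 := by
    intro l
    have h1 := hortho.inner_sum l l Finset.univ
    simp only [RCLike.star_def, starRingEnd_apply, star_trivial] at h1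
    rw [← real_inner_self_eq_norm_sq, h1]
    exact Finset.sum_congr rfl fun i _ => (sq (l i)).symm
  -- difference expansion
  have hwz : g x - z = ∑ i, (β i / lam i - β i / (lam i + εt i)) • v i := by
    rw [hw, hz, ← Finset.sum_sub_distrib]
    exact Finset.sum_congr rfl fun i _ => (sub_smul _ _ _).symm
  -- coefficientwise bound
  have hcoef : ∀ i, (β i / lam i - β i / (lam i + εt i))^2 ≤
      (2*ε₁*κ)^2 * (β i / lam i)^2 := by
    intro i
    have hlami := hlp i
    have hd := hdenp i
    have hd2 : 1 ≤ 2*κ*(lam i + εt i) := by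
      have := hden i
      rw [div_le_iff₀ (by positivity)] at this
      linarith [this]
    have habs : |εt i| ≤ ε₁ := hεt i
    have hkey : β i / lam i - β i / (lam i + εt i) =
        (β i / lam i) * (εt i / (lam i + εt i)) := by
      field_simp
      ring
    rw [hkey, mul_pow]
    have h2 : (εt i / (lam i + εt i))^2 ≤ (2*ε₁*κ)^2 := by
      rw [div_pow, div_le_iff₀ (by positivity)]
      have he2 : (εt i)^2 ≤ ε₁^2 := by
        rw [← sq_abs]; exact pow_le_pow_left₀ (abs_nonneg _) habs 2
      nlinarith [sq_nonneg (lam i + εt i), sq_nonneg ε₁, mul_pos hd hd,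
        mul_le_mul he2 (mul_le_mul hd2 hd2 (by positivity) (by positivity))
          (by positivity) (sq_nonneg ε₁)]
    calc (β i / lam i)^2 * (εt i / (lam i + εt i))^2
        ≤ (β i / lam i)^2 * (2*ε₁*κ)^2 :=
          mul_le_mul_of_nonneg_left h2 (sq_nonneg _)
      _ = (2*ε₁*κ)^2 * (β i / lam i)^2 := mul_comm _ _
  -- part 1
  have hsq : ‖g x - z‖^2 ≤ (2*ε₁*κ*‖g x‖)^2 := by
    rw [hwz, hnorm (fun i => β i / lam i - β i / (lam i + εt i))]
    have : ∑ i, (β i / lam i - β i / (lam i + εt i))^2 ≤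
        ∑ i, (2*ε₁*κ)^2 * (β i / lam i)^2 :=
      Finset.sum_le_sum fun i _ => hcoef i
    calc ∑ i, (β i / lam i - β i / (lam i + εt i))^2
        ≤ (2*ε₁*κ)^2 * ∑ i, (β i / lam i)^2 := by rw [Finset.mul_sum]; exact this
      _ = (2*ε₁*κ*‖g x‖)^2 := by
          have hWsq : ‖g x‖^2 = ∑ i, (β i / lam i)^2 := by
            rw [hw]; exact hnorm _
          rw [← hWsq]; ring
  have hpart1 : ‖g x - z‖ ≤ 2*ε₁*κ*‖g x‖ := by
    have h0 : 0 ≤ 2*ε₁*κ*‖g x‖ := by positivity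
    exact (pow_le_pow_iff_left₀ (norm_nonneg _) h0 two_ne_zero).mp hsq
  refine ⟨hpart1, ?_⟩
  -- part 2
  intro hP
  set W := ‖g x‖ with hW
  set Z := ‖z‖ with hZ
  set P : ℝ := inner ℝ (g x) z with hPdef
  have hwne : g x ≠ 0 := by
    intro h; rw [hPdef, h, inner_zero_left] at hP; exact lt_irrefl 0 hP
  have hzne : z ≠ 0 := by
    intro h; rw [hPdef, h, inner_zero_right] at hP; exact lt_irrefl 0 hP
  have hW0 : 0 < W := norm_pos_iff.mpr hwne
  have hZ0 : 0 < Z := norm_pos_iff.mpr hzne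
  have hCS : P ≤ W * Z := real_inner_le_norm _ _
  set c := 2*ε₁*κ with hc
  have hc0 : 0 ≤ c := by positivity
  have hsub : W^2 + Z^2 - 2*P ≤ c^2 * W^2 := by
    have h1 : ‖g x - z‖^2 = W^2 - 2*P + Z^2 := norm_sub_sq_real _ _
    have h2 : ‖g x - z‖^2 ≤ (c*W)^2 := by
      rw [hc]
      calc ‖g x - z‖^2 ≤ (2*ε₁*κ*‖g x‖)^2 := hsq
        _ = (2*ε₁*κ*W)^2 := by rw [hW]
    have h3 : (c*W)^2 = c^2 * W^2 := mul_pow c W 2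
    linarith [h1, h2, h3]
  have hDsq : ‖W⁻¹ • g x - Z⁻¹ • z‖^2 = 2 - 2*(P/(W*Z)) := by
    rw [norm_sub_sq_real]
    rw [norm_smul, norm_smul, real_inner_smul_left, real_inner_smul_right]
    rw [Real.norm_eq_abs, Real.norm_eq_abs, abs_of_pos (inv_pos.mpr hW0),
      abs_of_pos (inv_pos.mpr hZ0)]
    rw [← hPdef, ← hW, ← hZ]
    field_simp
    ring
  have h2c : Real.sqrt 2 * c = 2 * Real.sqrt 2 * κ * ε₁ := by rw [hc]; ring
  rw [← h2c]
  exact aux_angle_bound W Z P c _ hW0 hZ0 hP hCS hc0 hsub hDsq (norm_nonneg _)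
end
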